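/- Let Y be an integrable real-valued random variable whose CDF F is continuous and strictly increasing, and let α ∈ (0,1). For real numbers l ≤ u, define the absolute discrepancy loss of the interval [l,u] at outcome y as ℓ_α([l,u], y) = α(u−l)/2 + (l−y)^+ + (y−u)^+. Then the expected loss E[ℓ_α([l,u], Y)] is minimized over all pairs l ≤ u exactly at the pair with F(l) = α/2 and F(u) = 1 − α/2; that is, the endpoints of the optimal interval are the α/2 and 1−α/2 quantiles of Y, so the optimal interval is a 1−α prediction interval. -/

import Mathlib

open MeasureTheory

lemma pt1_aux (l l' y : ℝ) :
    max (l - y) 0 + (l' - l) * (if y ≤ l then (1:ℝ) else 0) ≤ max (l' - y) 0 := by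
  split_ifs with h
  · rw [max_eq_left (by linarith)]
    have := le_max_left (l' - y) (0:ℝ); linarith
  · push_neg at h
    rw [max_eq_right (by linarith : l - y ≤ 0)]
    have := le_max_right (l' - y) (0:ℝ); linarith

lemma pt2_aux (u u' y : ℝ) :
    max (y - u) 0 - (u' - u) * (if u < y then (1:ℝ) else 0) ≤ max (y - u') 0 := by
  split_ifs with h
  · rw [max_eq_left (by linarith)]
    have := le_max_left (y - u') (0:ℝ); linarith
  · push_neg at h
    rw [max_eq_right (by linarith : y - u ≤ 0)]
    have := le_max_right (y - u') (0:ℝ); linarith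

/-- for an integrable real random variable `Y` with continuous strictly
increasing CDF `F` and `α ∈ (0,1)`, the expected absolute-discrepancy interval loss
`E[α(u−l)/2 + (l−Y)⁺ + (Y−u)⁺]` is minimized over pairs `l ≤ u` exactly at the pair
with `F(l) = α/2` and `F(u) = 1 − α/2`. -/
theorem stmt_3 {Ω : Type*} [MeasurableSpace Ω] (P : Measure Ω) [IsProbabilityMeasure P]
    (Y : Ω → ℝ) (hYm : Measurable Y) (hY : Integrable Y P)
    (F : ℝ → ℝ) (hF : ∀ t, F t = (P {ω | Y ω ≤ t}).toReal)
    (hFc : Continuous F) (hFs : StrictMono F)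
    (α : ℝ) (hα : α ∈ Set.Ioo (0 : ℝ) 1) :
    ∀ l u : ℝ, l ≤ u →
      ((∀ l' u' : ℝ, l' ≤ u' →
          α * (u - l) / 2 + ∫ ω, (max (l - Y ω) 0 + max (Y ω - u) 0) ∂P ≤
          α * (u' - l') / 2 + ∫ ω, (max (l' - Y ω) 0 + max (Y ω - u') 0) ∂P) ↔
        (F l = α / 2 ∧ F u = 1 - α / 2)) := by
  obtain ⟨hα0, hα1⟩ := hα
  -- integrability
  have intA : ∀ a : ℝ, Integrable (fun ω => max (a - Y ω) 0) P := fun a =>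
    ((integrable_const a).sub hY).pos_part
  have intB : ∀ a : ℝ, Integrable (fun ω => max (Y ω - a) 0) P := fun a =>
    (hY.sub (integrable_const a)).pos_part
  have measA : ∀ a : ℝ, MeasurableSet {ω | Y ω ≤ a} := fun a => hYm measurableSet_Iic
  have measB : ∀ a : ℝ, MeasurableSet {ω | a < Y ω} := fun a => hYm measurableSet_Ioi
  have intIA : ∀ a : ℝ, Integrable (fun ω => if Y ω ≤ a then (1:ℝ) else 0) P := by
    intro a
    have h := (integrable_const (μ := P) (1:ℝ)).indicator (measA a)
    exact h.congr (Filter.Eventually.of_forall fun ω => by simp [Set.indicator_apply])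
  have intIB : ∀ a : ℝ, Integrable (fun ω => if a < Y ω then (1:ℝ) else 0) P := by
    intro a
    have h := (integrable_const (μ := P) (1:ℝ)).indicator (measB a)
    exact h.congr (Filter.Eventually.of_forall fun ω => by simp [Set.indicator_apply])
  have intgIA : ∀ a : ℝ, ∫ ω, (if Y ω ≤ a then (1:ℝ) else 0) ∂P = F a := by
    intro a
    rw [hF a]
    have h := integral_indicator_const (μ := P) (1:ℝ) (measA a)
    simpa [Set.indicator_apply, Measure.real] using h
  have intgIB : ∀ a : ℝ, ∫ ω, (if a < Y ω then (1:ℝ) else 0) ∂P = 1 - F a := by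
    intro a
    have h : ∫ ω, (if a < Y ω then (1:ℝ) else 0) ∂P = (P {ω | a < Y ω}).toReal := by
      have h := integral_indicator_const (μ := P) (1:ℝ) (measB a)
      simpa [Set.indicator_apply, Measure.real] using h
    rw [h, hF a]
    have hc : {ω | a < Y ω} = {ω | Y ω ≤ a}ᶜ := by ext ω; simp [not_le]
    rw [hc, measure_compl (measA a) (measure_ne_top P _), measure_univ,
      ENNReal.toReal_sub_of_le prob_le_one ENNReal.one_ne_top]
    simp
  -- key subgradient inequalities
  have key1 : ∀ a b : ℝ, ∫ ω, max (a - Y ω) 0 ∂P + (b - a) * F a ≤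
      ∫ ω, max (b - Y ω) 0 ∂P := by
    intro a b
    have h1 : (fun ω => max (a - Y ω) 0 + (b - a) * (if Y ω ≤ a then (1:ℝ) else 0)) ≤
        fun ω => max (b - Y ω) 0 := fun ω => pt1_aux a b (Y ω)
    have h2 := integral_mono ((intA a).add ((intIA a).const_mul (b - a))) (intA b) h1
    simp only [Pi.add_apply] at h2
    rwa [integral_add (intA a) ((intIA a).const_mul (b - a)), integral_const_mul,
      intgIA a] at h2
  have key2 : ∀ a b : ℝ, ∫ ω, max (Y ω - a) 0 ∂P - (b - a) * (1 - F a) ≤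
      ∫ ω, max (Y ω - b) 0 ∂P := by
    intro a b
    have h1 : (fun ω => max (Y ω - a) 0 - (b - a) * (if a < Y ω then (1:ℝ) else 0)) ≤
        fun ω => max (Y ω - b) 0 := fun ω => pt2_aux a b (Y ω)
    have h2 := integral_mono ((intB a).sub ((intIB a).const_mul (b - a))) (intB b) h1
    simp only [Pi.sub_apply] at h2
    rwa [integral_sub (intB a) ((intIB a).const_mul (b - a)), integral_const_mul,
      intgIB a] at h2
  have split : ∀ a b : ℝ, ∫ ω, (max (a - Y ω) 0 + max (Y ω - b) 0) ∂P =
      (∫ ω, max (a - Y ω) 0 ∂P) + ∫ ω, max (Y ω - b) 0 ∂P :=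
    fun a b => integral_add (intA a) (intB b)
  -- F is surjective onto (0,1)
  haveI : IsProbabilityMeasure (P.map Y) := Measure.isProbabilityMeasure_map hYm.aemeasurable
  have hFcdf : ∀ t, F t = ProbabilityTheory.cdf (P.map Y) t := by
    intro t
    rw [hF, ProbabilityTheory.cdf_eq_real, Measure.real]
    congr 1
    rw [Measure.map_apply hYm measurableSet_Iic]
    rfl
  have hsurj : ∀ c ∈ Set.Ioo (0:ℝ) 1, ∃ t, F t = c := by
    intro c hc
    have hbot : Filter.Tendsto F Filter.atBot (nhds 0) :=
      (ProbabilityTheory.tendsto_cdf_atBot (P.map Y)).congr fun t => (hFcdf t).symm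
    have htop : Filter.Tendsto F Filter.atTop (nhds 1) :=
      (ProbabilityTheory.tendsto_cdf_atTop (P.map Y)).congr fun t => (hFcdf t).symm
    obtain ⟨a, ha⟩ := (hbot.eventually_lt_const hc.1).exists
    obtain ⟨b, hb⟩ := (htop.eventually_const_lt hc.2).exists
    have hab : a ≤ b := le_of_lt (hFs.lt_iff_lt.mp (lt_trans ha hb))
    obtain ⟨t, _, ht⟩ := intermediate_value_Icc hab hFc.continuousOn
      ⟨le_of_lt ha, le_of_lt hb⟩
    exact ⟨t, ht⟩
  obtain ⟨l₀, hl₀⟩ := hsurj (α / 2) ⟨by linarith, by linarith⟩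
  obtain ⟨u₀, hu₀⟩ := hsurj (1 - α / 2) ⟨by linarith, by linarith⟩
  have hl₀u₀ : l₀ ≤ u₀ := le_of_lt (hFs.lt_iff_lt.mp (by rw [hl₀, hu₀]; linarith))
  intro l u hlu
  constructor
  · -- minimality implies the quantile conditions
    intro H
    have h1 : α * (u - l) / 2 + ((∫ ω, max (l - Y ω) 0 ∂P) + ∫ ω, max (Y ω - u) 0 ∂P) ≤
        α * (u₀ - l₀) / 2 + ((∫ ω, max (l₀ - Y ω) 0 ∂P) + ∫ ω, max (Y ω - u₀) 0 ∂P) := by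
      have := H l₀ u₀ hl₀u₀
      rwa [split, split] at this
    have h2 := key1 l₀ l
    have h3 := key2 u₀ u
    rw [hl₀] at h2
    rw [hu₀] at h3
    -- equalities for each coordinate
    have φeq : (∫ ω, max (l - Y ω) 0 ∂P) - α * l / 2 =
        (∫ ω, max (l₀ - Y ω) 0 ∂P) - α * l₀ / 2 := by linarith
    have ψeq : (∫ ω, max (Y ω - u) 0 ∂P) + α * u / 2 =
        (∫ ω, max (Y ω - u₀) 0 ∂P) + α * u₀ / 2 := by linarith
    have hl : l = l₀ := by
      by_contra hne
      rcases lt_or_gt_of_ne hne with hlt | hgt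
      · set t := (l + l₀) / 2 with htdef
        have h4 := key1 t l
        have h5 := key1 l₀ t
        rw [hl₀] at h5
        have hFt : F t < α / 2 := by rw [← hl₀]; exact hFs (by rw [htdef]; linarith)
        nlinarith [mul_pos (show (0:ℝ) < t - l by rw [htdef]; linarith)
          (show (0:ℝ) < α / 2 - F t by linarith)]
      · set t := (l + l₀) / 2 with htdef
        have h4 := key1 t l
        have h5 := key1 l₀ t
        rw [hl₀] at h5
        have hFt : α / 2 < F t := by rw [← hl₀]; exact hFs (by rw [htdef]; linarith)
        nlinarith [mul_pos (show (0:ℝ) < l - t by rw [htdef]; linarith)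
          (show (0:ℝ) < F t - α / 2 by linarith)]
    have hu : u = u₀ := by
      by_contra hne
      rcases lt_or_gt_of_ne hne with hlt | hgt
      · set t := (u + u₀) / 2 with htdef
        have h4 := key2 t u
        have h5 := key2 u₀ t
        rw [hu₀] at h5
        have hFt : F t < 1 - α / 2 := by rw [← hu₀]; exact hFs (by rw [htdef]; linarith)
        nlinarith [mul_pos (show (0:ℝ) < t - u by rw [htdef]; linarith)
          (show (0:ℝ) < (1 - F t) - α / 2 by linarith)]
      · set t := (u + u₀) / 2 with htdef
        have h4 := key2 t u
        have h5 := key2 u₀ t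
        rw [hu₀] at h5
        have hFt : 1 - α / 2 < F t := by rw [← hu₀]; exact hFs (by rw [htdef]; linarith)
        nlinarith [mul_pos (show (0:ℝ) < u - t by rw [htdef]; linarith)
          (show (0:ℝ) < α / 2 - (1 - F t) by linarith)]
    rw [hl, hu]
    exact ⟨hl₀, hu₀⟩
  · -- quantile conditions imply minimality
    rintro ⟨hl, hu⟩ l' u' _
    rw [split, split]
    have h2 := key1 l l'
    have h3 := key2 u u'
    rw [hl] at h2
    rw [hu] at h3
    linarith
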